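/- Let X_1 = {(0,1), (0,−1)} and X_2 = {(1,0), (−1,0)} in ℝ² (so k = 2, N = 4), and let the mixing measure μ be Lebesgue measure restricted to [0,1] (the uniform distribution). Then: (i) there exists ε₀ > 0 such that for all ε ∈ (0, ε₀], h_ε^1((0,0)) = 1/2; and (ii) for every t with 0 < |t| < 1, there exists ε₀ > 0 such that for all ε ∈ (0, ε₀], h_ε^1((0, t)) = 1. Consequently the pointwise limit classifier h(x) = lim_{ε→0⁺} h_ε(x) exists at these points, equals (1/2, 1/2) at the origin and (1, 0) on the rest of the open segment between (0,1) and (0,−1), and is therefore discontinuous at (0,0). -/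

import Mathlib

open MeasureTheory

noncomputable section

variable {E : Type*} [NormedAddCommGroup E] [NormedSpace ℝ E]

/-- The set of mixing coefficients `λ ∈ [0,1]` for which the mixed point
`λ • s + (1 - λ) • t` lies within distance `ε` of `x`. -/
def mixSet (s t x : E) (ε : ℝ) : Set ℝ :=
  {l : ℝ | l ∈ Set.Icc (0 : ℝ) 1 ∧ ‖l • s + (1 - l) • t - x‖ < ε}

/-- `ξ^{i,j}_{x,ε}`: the (normalized) measure of pairs and coefficients mixing
a point of `Xi` with a point of `Xj` into the `ε`-ball around `x`. -/
def xiMeas (μ : Measure ℝ) (N : ℕ) (Xi Xj : Finset E) (x : E) (ε : ℝ) : ℝ :=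
  (1 / (N : ℝ) ^ 2) * ∑ s ∈ Xi, ∑ t ∈ Xj, (μ (mixSet s t x ε)).toReal

/-- `ξ^{i,j}_{x,ε,λ}`: the corresponding expectation of `λ`. -/
def xiLam (μ : Measure ℝ) (N : ℕ) (Xi Xj : Finset E) (x : E) (ε : ℝ) : ℝ :=
  (1 / (N : ℝ) ^ 2) * ∑ s ∈ Xi, ∑ t ∈ Xj, ∫ l in mixSet s t x ε, l ∂μ

/-- Numerator of the Mixup-optimal local classifier value `h_ε^i(x)`. -/
def hNum {k : ℕ} (μ : Measure ℝ) (N : ℕ) (X : Fin k → Finset E) (i : Fin k)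
    (x : E) (ε : ℝ) : ℝ :=
  xiMeas μ N (X i) (X i) x ε +
    ∑ j ∈ Finset.univ.filter (fun j => j ≠ i),
      (xiLam μ N (X i) (X j) x ε +
        (xiMeas μ N (X j) (X i) x ε - xiLam μ N (X j) (X i) x ε))

/-- Denominator of the Mixup-optimal local classifier value. -/
def hDen {k : ℕ} (μ : Measure ℝ) (N : ℕ) (X : Fin k → Finset E) (x : E) (ε : ℝ) : ℝ :=
  ∑ q : Fin k, hNum μ N X q x ε

/-- The Mixup-optimal local classifier value `h_ε^i(x)`. -/
def hEps {k : ℕ} (μ : Measure ℝ) (N : ℕ) (X : Fin k → Finset E) (i : Fin k)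
    (x : E) (ε : ℝ) : ℝ :=
  hNum μ N X i x ε / hDen μ N X x ε

end

open MeasureTheory Filter

/-- The point `(a, b)` of the Euclidean plane. -/
noncomputable def pt (a b : ℝ) : EuclideanSpace ℝ (Fin 2) :=
  (WithLp.equiv 2 (Fin 2 → ℝ)).symm ![a, b]

/-- The dataset of Proposition 2: `X₁ = {(0,1), (0,-1)}`, `X₂ = {(1,0), (-1,0)}`. -/
noncomputable def Xcross : Fin 2 → Finset (EuclideanSpace ℝ (Fin 2)) :=
  letI := Classical.decEq (EuclideanSpace ℝ (Fin 2))
  ![{pt 0 1, pt 0 (-1)}, {pt 1 0, pt (-1) 0}]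

/-! ### Auxiliary lemmas -/

section Aux
set_option linter.unusedSectionVars false
set_option linter.unusedVariables false

lemma norm_mix (a b c d e f l : ℝ) :
    ‖l • pt a b + (1 - l) • pt c d - pt e f‖
      = Real.sqrt ((l*a + (1-l)*c - e)^2 + (l*b + (1-l)*d - f)^2) := by
  rw [EuclideanSpace.norm_eq]
  simp [pt, Fin.sum_univ_two, Real.norm_eq_abs, sq_abs]

lemma mixSet_eq_empty {s t x : EuclideanSpace ℝ (Fin 2)} {ε : ℝ}
    (h : ∀ l ∈ Set.Icc (0:ℝ) 1, ε ≤ ‖l • s + (1 - l) • t - x‖) :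
    mixSet s t x ε = ∅ := by
  ext l
  simp only [mixSet, Set.mem_setOf_eq, Set.mem_empty_iff_false, iff_false, not_and, not_lt]
  exact fun hl => h l hl

lemma le_sqrt_of_sq_le {ε u : ℝ} (hε : 0 ≤ ε) (h : ε^2 ≤ u) : ε ≤ Real.sqrt u := by
  calc ε = Real.sqrt (ε^2) := (Real.sqrt_sq hε).symm
    _ ≤ Real.sqrt u := Real.sqrt_le_sqrt h

section empties
variable {t ε : ℝ} (ht : |t| < 1) (hε : 0 < ε) (hε2 : ε ≤ (1 - |t|)/2)
include ht hε hε2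

lemma e_AA : mixSet (pt 0 1) (pt 0 1) (pt 0 t) ε = ∅ := by
  apply mixSet_eq_empty; intro l hl
  rw [norm_mix]; apply le_sqrt_of_sq_le hε.le
  nlinarith [le_abs_self t, neg_abs_le t, sq_nonneg (1-t)]

lemma e_BB : mixSet (pt 0 (-1)) (pt 0 (-1)) (pt 0 t) ε = ∅ := by
  apply mixSet_eq_empty; intro l hl
  rw [norm_mix]; apply le_sqrt_of_sq_le hε.le
  nlinarith [le_abs_self t, neg_abs_le t, sq_nonneg (1+t)]

lemma e_AC : mixSet (pt 0 1) (pt 1 0) (pt 0 t) ε = ∅ := by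
  apply mixSet_eq_empty; intro l hl
  rw [norm_mix]; apply le_sqrt_of_sq_le hε.le
  nlinarith [le_abs_self t, neg_abs_le t, sq_nonneg (1 - l - (l - t)), sq_nonneg (1-t)]

lemma e_AD : mixSet (pt 0 1) (pt (-1) 0) (pt 0 t) ε = ∅ := by
  apply mixSet_eq_empty; intro l hl
  rw [norm_mix]; apply le_sqrt_of_sq_le hε.le
  nlinarith [le_abs_self t, neg_abs_le t, sq_nonneg (1 - l - (l - t)), sq_nonneg (1-t)]

lemma e_BC : mixSet (pt 0 (-1)) (pt 1 0) (pt 0 t) ε = ∅ := by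
  apply mixSet_eq_empty; intro l hl
  rw [norm_mix]; apply le_sqrt_of_sq_le hε.le
  nlinarith [le_abs_self t, neg_abs_le t, sq_nonneg (1 - l - (l + t)), sq_nonneg (1+t)]

lemma e_BD : mixSet (pt 0 (-1)) (pt (-1) 0) (pt 0 t) ε = ∅ := by
  apply mixSet_eq_empty; intro l hl
  rw [norm_mix]; apply le_sqrt_of_sq_le hε.le
  nlinarith [le_abs_self t, neg_abs_le t, sq_nonneg (1 - l - (l + t)), sq_nonneg (1+t)]

lemma e_CA : mixSet (pt 1 0) (pt 0 1) (pt 0 t) ε = ∅ := by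
  apply mixSet_eq_empty; intro l hl
  rw [norm_mix]; apply le_sqrt_of_sq_le hε.le
  nlinarith [le_abs_self t, neg_abs_le t, sq_nonneg (l - (1 - l - t)), sq_nonneg (1-t)]

lemma e_DA : mixSet (pt (-1) 0) (pt 0 1) (pt 0 t) ε = ∅ := by
  apply mixSet_eq_empty; intro l hl
  rw [norm_mix]; apply le_sqrt_of_sq_le hε.le
  nlinarith [le_abs_self t, neg_abs_le t, sq_nonneg (l - (1 - l - t)), sq_nonneg (1-t)]

lemma e_CB : mixSet (pt 1 0) (pt 0 (-1)) (pt 0 t) ε = ∅ := by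
  apply mixSet_eq_empty; intro l hl
  rw [norm_mix]; apply le_sqrt_of_sq_le hε.le
  nlinarith [le_abs_self t, neg_abs_le t, sq_nonneg (l - (1 - l + t)), sq_nonneg (1+t)]

lemma e_DB : mixSet (pt (-1) 0) (pt 0 (-1)) (pt 0 t) ε = ∅ := by
  apply mixSet_eq_empty; intro l hl
  rw [norm_mix]; apply le_sqrt_of_sq_le hε.le
  nlinarith [le_abs_self t, neg_abs_le t, sq_nonneg (l - (1 - l + t)), sq_nonneg (1+t)]

lemma e_CC : mixSet (pt 1 0) (pt 1 0) (pt 0 t) ε = ∅ := by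
  apply mixSet_eq_empty; intro l hl
  rw [norm_mix]; apply le_sqrt_of_sq_le hε.le
  nlinarith [le_abs_self t, neg_abs_le t, sq_nonneg t, abs_nonneg t]

lemma e_DD : mixSet (pt (-1) 0) (pt (-1) 0) (pt 0 t) ε = ∅ := by
  apply mixSet_eq_empty; intro l hl
  rw [norm_mix]; apply le_sqrt_of_sq_le hε.le
  nlinarith [le_abs_self t, neg_abs_le t, sq_nonneg t, abs_nonneg t]

end empties

section emptiesT
variable {t ε : ℝ} (hε : 0 < ε) (hεt : ε ≤ |t|)
include hε hεt

lemma e_CD : mixSet (pt 1 0) (pt (-1) 0) (pt 0 t) ε = ∅ := by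
  apply mixSet_eq_empty; intro l hl
  rw [norm_mix]; apply le_sqrt_of_sq_le hε.le
  nlinarith [sq_nonneg (2*l-1), sq_abs t, abs_nonneg t]

lemma e_DC : mixSet (pt (-1) 0) (pt 1 0) (pt 0 t) ε = ∅ := by
  apply mixSet_eq_empty; intro l hl
  rw [norm_mix]; apply le_sqrt_of_sq_le hε.le
  nlinarith [sq_nonneg (2*l-1), sq_abs t, abs_nonneg t]

end emptiesT

lemma mixSet_eq_Ioo {s t x : EuclideanSpace ℝ (Fin 2)} {c ε : ℝ}
    (hc2 : c ≤ |c|) (hc1 : -(|c|) ≤ c) (hε' : ε ≤ 1 - |c|)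
    (h : ∀ l : ℝ, ‖l • s + (1 - l) • t - x‖ = |2*l - (1+c)|) :
    mixSet s t x ε = Set.Ioo ((1+c-ε)/2) ((1+c+ε)/2) := by
  ext l
  simp only [mixSet, Set.mem_setOf_eq, Set.mem_Icc, Set.mem_Ioo, h l, abs_lt]
  constructor
  · rintro ⟨⟨_, _⟩, h1, h2⟩; constructor <;> linarith
  · rintro ⟨h1, h2⟩
    refine ⟨⟨by linarith, by linarith⟩, by linarith, by linarith⟩

lemma meas_Ioo_eps {a b : ℝ} (hab : a ≤ b) (h0 : 0 ≤ a) (h1 : b ≤ 1) :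
    ((volume.restrict (Set.Icc (0:ℝ) 1)) (Set.Ioo a b)).toReal = b - a := by
  rw [Measure.restrict_apply measurableSet_Ioo,
    Set.inter_eq_left.mpr (Set.Ioo_subset_Icc_self.trans (Set.Icc_subset_Icc h0 h1)),
    Real.volume_Ioo, ENNReal.toReal_ofReal (by linarith)]

section meas
variable {t ε : ℝ} (ht : |t| < 1) (hε : 0 < ε) (hε2 : ε ≤ 1 - |t|)
include ht hε hε2

lemma m_AB :
    ((volume.restrict (Set.Icc (0:ℝ) 1)) (mixSet (pt 0 1) (pt 0 (-1)) (pt 0 t) ε)).toReal = ε := by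
  have h : ∀ l : ℝ, ‖l • pt 0 1 + (1 - l) • pt 0 (-1) - pt 0 t‖ = |2*l - (1+t)| := by
    intro l
    rw [norm_mix, show (l*0 + (1-l)*0 - 0)^2 + (l*1 + (1-l)*(-1) - t)^2 = (2*l - (1+t))^2 by ring,
      Real.sqrt_sq_eq_abs]
  rw [mixSet_eq_Ioo (le_abs_self t) (neg_abs_le t) hε2 h]
  have h1 := le_abs_self t; have h2 := neg_abs_le t
  rw [meas_Ioo_eps (by linarith) (by linarith) (by linarith)]; ring

lemma m_BA :
    ((volume.restrict (Set.Icc (0:ℝ) 1)) (mixSet (pt 0 (-1)) (pt 0 1) (pt 0 t) ε)).toReal = ε := by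
  have h : ∀ l : ℝ, ‖l • pt 0 (-1) + (1 - l) • pt 0 1 - pt 0 t‖ = |2*l - (1+(-t))| := by
    intro l
    rw [norm_mix, show (l*0 + (1-l)*0 - 0)^2 + (l*(-1) + (1-l)*1 - t)^2 = (2*l - (1+(-t)))^2 by ring,
      Real.sqrt_sq_eq_abs]
  rw [mixSet_eq_Ioo (le_abs_self (-t)) (neg_abs_le (-t)) (by rwa [abs_neg]) h]
  have h1 := le_abs_self t; have h2 := neg_abs_le t
  rw [meas_Ioo_eps (by linarith) (by linarith)
    (by linarith)]
  ring

end meas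

section measO
variable {ε : ℝ} (hε : 0 < ε) (hε2 : ε ≤ 1)
include hε hε2

lemma m_CD :
    ((volume.restrict (Set.Icc (0:ℝ) 1)) (mixSet (pt 1 0) (pt (-1) 0) (pt 0 0) ε)).toReal = ε := by
  have h : ∀ l : ℝ, ‖l • pt 1 0 + (1 - l) • pt (-1) 0 - pt 0 0‖ = |2*l - (1+(0:ℝ))| := by
    intro l
    rw [norm_mix,
      show (l*1 + (1-l)*(-1) - 0)^2 + (l*0 + (1-l)*0 - 0)^2 = (2*l - (1+(0:ℝ)))^2 by ring,
      Real.sqrt_sq_eq_abs]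
  rw [mixSet_eq_Ioo (by simp) (by simp) (by simpa using hε2) h]
  rw [meas_Ioo_eps (by linarith) (by linarith) (by linarith)]; ring

lemma m_DC :
    ((volume.restrict (Set.Icc (0:ℝ) 1)) (mixSet (pt (-1) 0) (pt 1 0) (pt 0 0) ε)).toReal = ε := by
  have h : ∀ l : ℝ, ‖l • pt (-1) 0 + (1 - l) • pt 1 0 - pt 0 0‖ = |2*l - (1+(0:ℝ))| := by
    intro l
    rw [norm_mix,
      show (l*(-1) + (1-l)*1 - 0)^2 + (l*0 + (1-l)*0 - 0)^2 = (2*l - (1+(0:ℝ)))^2 by ring,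
      Real.sqrt_sq_eq_abs]
  rw [mixSet_eq_Ioo (by simp) (by simp) (by simpa using hε2) h]
  rw [meas_Ioo_eps (by linarith) (by linarith) (by linarith)]; ring

end measO

lemma pt_zero : (0 : EuclideanSpace ℝ (Fin 2)) = pt 0 0 := by
  ext i; fin_cases i <;> simp [pt]

lemma pt_ne {a b c d : ℝ} (h : a ≠ c ∨ b ≠ d) : pt a b ≠ pt c d := by
  intro hh
  rcases h with h | h
  · exact h (by have := congrArg (fun v : EuclideanSpace ℝ (Fin 2) => v 0) hh; simpa [pt] using this)
  · exact h (by have := congrArg (fun v : EuclideanSpace ℝ (Fin 2) => v 1) hh; simpa [pt] using this)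

lemma norm_pt (a b : ℝ) : ‖pt a b‖ = Real.sqrt (a^2 + b^2) := by
  rw [EuclideanSpace.norm_eq]
  simp [pt, Fin.sum_univ_two, Real.norm_eq_abs, sq_abs]

lemma sum_X0 {M : Type*} [AddCommMonoid M] (f : EuclideanSpace ℝ (Fin 2) → M) :
    ∑ s ∈ Xcross 0, f s = f (pt 0 1) + f (pt 0 (-1)) := by
  classical
  have e : Xcross 0 = ({pt 0 1, pt 0 (-1)} : Finset _) := by
    simp only [Xcross, Matrix.cons_val_zero]
    convert rfl
  rw [e, Finset.sum_insert (by simp; exact pt_ne (Or.inr (by norm_num))), Finset.sum_singleton]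

lemma sum_X1 {M : Type*} [AddCommMonoid M] (f : EuclideanSpace ℝ (Fin 2) → M) :
    ∑ s ∈ Xcross 1, f s = f (pt 1 0) + f (pt (-1) 0) := by
  classical
  have e : Xcross 1 = ({pt 1 0, pt (-1) 0} : Finset _) := by
    simp only [Xcross, Matrix.cons_val_one, Matrix.head_cons, Matrix.cons_val_zero]
    convert rfl
  rw [e, Finset.sum_insert (by simp; exact pt_ne (Or.inl (by norm_num))), Finset.sum_singleton]

lemma filter0 : (Finset.univ.filter (fun j => j ≠ (0 : Fin 2))) = {1} := by decide
lemma filter1 : (Finset.univ.filter (fun j => j ≠ (1 : Fin 2))) = {0} := by decide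

/-- Evaluation of the numerators at `pt 0 t`, given the value of the `X₂×X₂` term. -/
lemma hNum_eval {t ε m : ℝ} (ht : |t| < 1) (hε : 0 < ε) (hε2 : ε ≤ (1 - |t|)/2)
    (hm : xiMeas (volume.restrict (Set.Icc (0:ℝ) 1)) 4 (Xcross 1) (Xcross 1) (pt 0 t) ε = m) :
    hNum (volume.restrict (Set.Icc (0:ℝ) 1)) 4 Xcross 0 (pt 0 t) ε = ε/8 ∧
    hNum (volume.restrict (Set.Icc (0:ℝ) 1)) 4 Xcross 1 (pt 0 t) ε = m := by
  have hε2' : ε ≤ 1 - |t| := by have := abs_nonneg t; linarith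
  set μ₀ := volume.restrict (Set.Icc (0:ℝ) 1) with hμ₀
  have hL01 : xiLam μ₀ 4 (Xcross 0) (Xcross 1) (pt 0 t) ε = 0 := by
    unfold xiLam; simp only [sum_X0, sum_X1]
    rw [e_AC ht hε hε2, e_AD ht hε hε2, e_BC ht hε hε2, e_BD ht hε hε2]
    simp
  have hL10 : xiLam μ₀ 4 (Xcross 1) (Xcross 0) (pt 0 t) ε = 0 := by
    unfold xiLam; simp only [sum_X0, sum_X1]
    rw [e_CA ht hε hε2, e_CB ht hε hε2, e_DA ht hε hε2, e_DB ht hε hε2]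
    simp
  have hM01 : xiMeas μ₀ 4 (Xcross 0) (Xcross 1) (pt 0 t) ε = 0 := by
    unfold xiMeas; simp only [sum_X0, sum_X1]
    rw [e_AC ht hε hε2, e_AD ht hε hε2, e_BC ht hε hε2, e_BD ht hε hε2]
    simp
  have hM10 : xiMeas μ₀ 4 (Xcross 1) (Xcross 0) (pt 0 t) ε = 0 := by
    unfold xiMeas; simp only [sum_X0, sum_X1]
    rw [e_CA ht hε hε2, e_CB ht hε hε2, e_DA ht hε hε2, e_DB ht hε hε2]
    simp
  have hM00 : xiMeas μ₀ 4 (Xcross 0) (Xcross 0) (pt 0 t) ε = ε/8 := by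
    unfold xiMeas; simp only [sum_X0]
    rw [e_AA ht hε hε2, e_BB ht hε hε2, hμ₀, m_AB ht hε hε2', m_BA ht hε hε2']
    simp; norm_num; ring
  constructor
  · unfold hNum
    rw [filter0, Finset.sum_singleton]
    show xiMeas μ₀ 4 (Xcross 0) (Xcross 0) _ _ + _ = _
    rw [hM00, hL01, hM10, hL10]; ring
  · unfold hNum
    rw [filter1, Finset.sum_singleton]
    show xiMeas μ₀ 4 (Xcross 1) (Xcross 1) _ _ + _ = _
    rw [hm, hL10, hM01, hL01]; ring

lemma partI {ε : ℝ} (hε : 0 < ε) (hε' : ε ≤ 1/2) :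
    hEps (volume.restrict (Set.Icc (0:ℝ) 1)) 4 Xcross 0 (0 : EuclideanSpace ℝ (Fin 2)) ε = 1/2 ∧
    hEps (volume.restrict (Set.Icc (0:ℝ) 1)) 4 Xcross 1 (0 : EuclideanSpace ℝ (Fin 2)) ε = 1/2 := by
  rw [pt_zero]
  have ht : |(0:ℝ)| < 1 := by norm_num
  have hε2 : ε ≤ (1 - |(0:ℝ)|)/2 := by simpa using hε'
  have hm : xiMeas (volume.restrict (Set.Icc (0:ℝ) 1)) 4 (Xcross 1) (Xcross 1) (pt 0 0) ε
      = ε/8 := by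
    unfold xiMeas; simp only [sum_X1]
    rw [e_CC ht hε hε2, e_DD ht hε hε2, m_CD hε (by linarith), m_DC hε (by linarith)]
    simp; norm_num; ring
  obtain ⟨h0, h1⟩ := hNum_eval ht hε hε2 hm
  have hden : hDen (volume.restrict (Set.Icc (0:ℝ) 1)) 4 Xcross (pt 0 0) ε = ε/4 := by
    unfold hDen; rw [Fin.sum_univ_two, h0, h1]; ring
  constructor
  · unfold hEps; rw [h0, hden, div_eq_iff (by positivity)]; ring
  · unfold hEps; rw [h1, hden, div_eq_iff (by positivity)]; ring

lemma partII {t ε : ℝ} (ht0 : 0 < |t|) (ht1 : |t| < 1) (hε : 0 < ε)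
    (hε' : ε ≤ min |t| ((1 - |t|)/2)) :
    hEps (volume.restrict (Set.Icc (0:ℝ) 1)) 4 Xcross 0 (pt 0 t) ε = 1 ∧
    hEps (volume.restrict (Set.Icc (0:ℝ) 1)) 4 Xcross 1 (pt 0 t) ε = 0 := by
  have hεt : ε ≤ |t| := hε'.trans (min_le_left _ _)
  have hε2 : ε ≤ (1 - |t|)/2 := hε'.trans (min_le_right _ _)
  have hm : xiMeas (volume.restrict (Set.Icc (0:ℝ) 1)) 4 (Xcross 1) (Xcross 1) (pt 0 t) ε
      = 0 := by
    unfold xiMeas; simp only [sum_X1]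
    rw [e_CC ht1 hε hε2, e_DD ht1 hε hε2, e_CD hε hεt, e_DC hε hεt]
    simp
  obtain ⟨h0, h1⟩ := hNum_eval ht1 hε hε2 hm
  have hden : hDen (volume.restrict (Set.Icc (0:ℝ) 1)) 4 Xcross (pt 0 t) ε = ε/8 := by
    unfold hDen; rw [Fin.sum_univ_two, h0, h1]; ring
  constructor
  · unfold hEps; rw [h0, hden, div_self (by positivity)]
  · unfold hEps; rw [h1, hden, zero_div]

end Aux

/-- Proposition 2 of the paper: with uniform mixing on `[0,1]`, the Mixup-optimal
classifier for the cross dataset equals `(1/2, 1/2)` near the origin, equals `(1, 0)` on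
the rest of the open segment between `(0,1)` and `(0,-1)`, and is hence discontinuous at
the origin. -/
theorem mixup_optimal_discontinuous :
    (∃ ε₀ > (0 : ℝ), ∀ ε : ℝ, 0 < ε → ε ≤ ε₀ →
        hEps (volume.restrict (Set.Icc (0 : ℝ) 1)) 4 Xcross 0
            (0 : EuclideanSpace ℝ (Fin 2)) ε = 1 / 2 ∧
        hEps (volume.restrict (Set.Icc (0 : ℝ) 1)) 4 Xcross 1
            (0 : EuclideanSpace ℝ (Fin 2)) ε = 1 / 2) ∧
    (∀ t : ℝ, 0 < |t| → |t| < 1 → ∃ ε₀ > (0 : ℝ), ∀ ε : ℝ, 0 < ε → ε ≤ ε₀ →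
        hEps (volume.restrict (Set.Icc (0 : ℝ) 1)) 4 Xcross 0 (pt 0 t) ε = 1 ∧
        hEps (volume.restrict (Set.Icc (0 : ℝ) 1)) 4 Xcross 1 (pt 0 t) ε = 0) ∧
    ¬ContinuousAt
      (fun x : EuclideanSpace ℝ (Fin 2) =>
        limUnder (nhdsWithin 0 (Set.Ioi 0))
          (fun ε => hEps (volume.restrict (Set.Icc (0 : ℝ) 1)) 4 Xcross 0 x ε))
      (0 : EuclideanSpace ℝ (Fin 2)) := by
  refine ⟨⟨1/2, by norm_num, fun ε hε hε' => partI hε hε'⟩,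
    fun t ht0 ht1 => ⟨min |t| ((1 - |t|)/2), lt_min ht0 (by linarith), fun ε hε hε' =>
      partII ht0 ht1 hε hε'⟩, ?_⟩
  set g : EuclideanSpace ℝ (Fin 2) → ℝ := fun x =>
    limUnder (nhdsWithin 0 (Set.Ioi 0))
      (fun ε => hEps (volume.restrict (Set.Icc (0 : ℝ) 1)) 4 Xcross 0 x ε) with hg
  have g0 : g 0 = 1/2 := by
    apply Filter.Tendsto.limUnder_eq
    apply Filter.Tendsto.congr' _ (tendsto_const_nhds (α := ℝ) (x := (1:ℝ)/2))
    filter_upwards [Ioo_mem_nhdsGT_of_mem (by norm_num : (0:ℝ) ∈ Set.Ico (0:ℝ) (1/2))] with ε hε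
    exact ((partI hε.1 hε.2.le).1).symm
  have gt' : ∀ t : ℝ, 0 < |t| → |t| < 1 → g (pt 0 t) = 1 := by
    intro t ht0 ht1
    have hpos : 0 < min |t| ((1 - |t|)/2) := lt_min ht0 (by linarith)
    apply Filter.Tendsto.limUnder_eq
    apply Filter.Tendsto.congr' _ (tendsto_const_nhds (α := ℝ) (x := (1:ℝ)))
    filter_upwards [Ioo_mem_nhdsGT_of_mem
      (Set.mem_Ico.mpr ⟨le_refl (0:ℝ), hpos⟩)] with ε hε
    exact ((partII ht0 ht1 hε.1 hε.2.le).1).symm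
  intro hcont
  rw [Metric.continuousAt_iff] at hcont
  obtain ⟨δ, hδpos, hδ⟩ := hcont (1/4) (by norm_num)
  set s : ℝ := min (δ/2) (1/2) with hs
  have hspos : 0 < s := lt_min (by linarith) (by norm_num)
  have hs1 : s < 1 := lt_of_le_of_lt (min_le_right _ _) (by norm_num)
  have habs : |s| = s := abs_of_pos hspos
  have hdist : dist (pt 0 s) (0 : EuclideanSpace ℝ (Fin 2)) < δ := by
    rw [dist_eq_norm, sub_zero, norm_pt,
      show (0:ℝ)^2 + s^2 = s^2 by ring, Real.sqrt_sq hspos.le]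
    calc s ≤ δ/2 := min_le_left _ _
      _ < δ := by linarith
  have := hδ hdist
  rw [gt' s (by rw [habs]; exact hspos) (by rw [habs]; exact hs1), g0] at this
  rw [Real.dist_eq, show (1:ℝ) - 1/2 = 1/2 by norm_num,
    abs_of_pos (by norm_num : (0:ℝ) < 1/2)] at this
  linarith
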